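/- arXiv:1706.08170 — 2 statements merged into one kernel-verified Lean document; each statement's English description precedes it below -/
import Mathlib

section
/- Let q be an image-transformation from a locally compact Hausdorff space X to a Hausdorff space Y, and define q(a)(y) := (q*δ_y)(a) for a ∈ C_b(X), where q*δ_y = δ_y ∘ q is the pulled-back simple quasi-measure and the value is its quasi-integral at a. Then q(a) ∈ C_b(Y), q ∘ a⁻¹ = (q(a))⁻¹ as maps on images of ℝ, and q(φ ∘ a) = φ ∘ q(a) for every continuous φ : ℝ → ℝ, so a ↦ q(a) restricts to an algebra homomorphism A(a) → A(q(a)) for each a. -/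
open Set MeasureTheory BoundedContinuousFunction Filter Topology

/-- An *image* is a set that is either open or closed. -/
def IsImage {X : Type*} [TopologicalSpace X] (A : Set X) : Prop := IsOpen A ∨ IsClosed A

/-- A (normalized, additive, compact-regular) quasi-measure on the images of `X`. -/
structure IsQuasiMeasure {X : Type*} [TopologicalSpace X] (μ : Set X → ℝ) : Prop where
  nonneg : ∀ A : Set X, IsImage A → 0 ≤ μ A
  normalized : μ Set.univ = 1
  additive : ∀ A B : Set X, IsImage A → IsImage B → IsImage (A ∪ B) → Disjoint A B →
    μ (A ∪ B) = μ A + μ B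
  regular : ∀ U : Set X, IsOpen U →
    IsLUB {r : ℝ | ∃ K : Set X, IsCompact K ∧ K ⊆ U ∧ μ K = r} (μ U)

/-- A quasi-measure is simple if it only takes the values 0 and 1. -/
def IsSimpleQM {X : Type*} [TopologicalSpace X] (μ : Set X → ℝ) : Prop :=
  ∀ A : Set X, IsImage A → μ A = 0 ∨ μ A = 1

-- Membership in the singly generated algebra `A(c) = {φ ∘ c : φ ∈ C(ℝ,ℝ)}`.
-- def InAlg {X : Type*} [TopologicalSpace X] (c f : X →ᵇ ℝ) : Prop :=
-- ∃ φ : C(ℝ, ℝ), ∀ x, f x = φ (c x)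
-- 
-- -- The quasi-integral of `a` with respect to `μ`: `∫ t dμ_a(t)` where `μ_a`
-- -- is the Borel probability measure extending `μ ∘ a⁻¹` (if it exists).
open Classical in
noncomputable def qint {X : Type*} [TopologicalSpace X] (μ : Set X → ℝ) (a : X →ᵇ ℝ) : ℝ :=
  if h : ∃ ν : MeasureTheory.Measure ℝ, MeasureTheory.IsProbabilityMeasure ν ∧
      ∀ A : Set ℝ, IsImage A → ν A = ENNReal.ofReal (μ (a ⁻¹' A))
  then ∫ t, t ∂ h.choose else 0

/-- An image-transformation from `X` to `Y`. -/
structure IsImageTransformation {X Y : Type*} [TopologicalSpace X] [TopologicalSpace Y]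
    (q : Set X → Set Y) : Prop where
  image : ∀ A : Set X, IsImage A → IsImage (q A)
  top : q Set.univ = Set.univ
  openMap : ∀ U : Set X, IsOpen U → IsOpen (q U)
  additive : ∀ A B : Set X, IsImage A → IsImage B → IsImage (A ∪ B) → Disjoint A B →
    q (A ∪ B) = q A ∪ q B ∧ Disjoint (q A) (q B)
  regular : ∀ U : Set X, IsOpen U → ∀ K : Set Y, IsCompact K → K ⊆ q U →
    ∃ L : Set X, IsCompact L ∧ L ⊆ U ∧ K ⊆ q L

-- The function `q(a) : Y → ℝ`, `q(a)(y) = (q*δ_y)(a)`, the quasi-integral of `a` with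
-- respect to the pulled-back simple quasi-measure `δ_y ∘ q`.
open Classical in
noncomputable def qmap {X Y : Type*} [TopologicalSpace X] [TopologicalSpace Y]
    (q : Set X → Set Y) (a : X →ᵇ ℝ) (y : Y) : ℝ :=
  qint (fun A : Set X => if y ∈ q A then (1 : ℝ) else 0) a

section Helpers

variable {X Y : Type*} [TopologicalSpace X] [T2Space X] [LocallyCompactSpace X]
  [TopologicalSpace Y] [T2Space Y] {q : Set X → Set Y}

lemma IsImage.compl' {Z : Type*} [TopologicalSpace Z] {A : Set Z} (h : IsImage A) :
    IsImage Aᶜ :=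
  h.elim (fun h => Or.inr h.isClosed_compl) (fun h => Or.inl h.isOpen_compl)

lemma qempty (hq : IsImageTransformation q) : q ∅ = ∅ := by
  have h := hq.additive ∅ ∅ (Or.inl isOpen_empty) (Or.inl isOpen_empty)
    (by rw [Set.union_empty]; exact Or.inl isOpen_empty) (by simp)
  simpa using disjoint_self.1 h.2

lemma qcompl (hq : IsImageTransformation q) {A : Set X} (hA : IsImage A) :
    q Aᶜ = (q A)ᶜ := by
  have h := hq.additive A Aᶜ hA hA.compl'
    (by rw [Set.union_compl_self]; exact Or.inl isOpen_univ) disjoint_compl_right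
  rw [Set.union_compl_self, hq.top] at h
  have hc : IsCompl (q A) (q Aᶜ) :=
    ⟨h.2, codisjoint_iff.2 (by simpa [Set.sup_eq_union, Set.top_eq_univ] using h.1.symm)⟩
  exact hc.compl_eq.symm

lemma qmono (hq : IsImageTransformation q) :
    ∀ {A B : Set X}, IsImage A → IsImage B → A ⊆ B → q A ⊆ q B := by
  have step : ∀ {A B : Set X}, IsImage A → IsImage (B \ A) → IsImage B → A ⊆ B →
      q A ⊆ q B := by
    intro A B hA hBA hB hAB
    have h := hq.additive A (B \ A) hA hBA (by rwa [Set.union_diff_cancel hAB])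
      disjoint_sdiff_right
    rw [Set.union_diff_cancel hAB] at h
    rw [h.1]; exact Set.subset_union_left
  have oo : ∀ {A B : Set X}, IsOpen A → IsOpen B → A ⊆ B → q A ⊆ q B := by
    intro A B hA hB hAB y hy
    obtain ⟨L, hLc, hLA, hyL⟩ := hq.regular A hA {y} isCompact_singleton
      (Set.singleton_subset_iff.2 hy)
    exact step (Or.inr hLc.isClosed) (Or.inl (hB.sdiff hLc.isClosed)) (Or.inl hB)
      (hLA.trans hAB) (Set.singleton_subset_iff.1 hyL)
  intro A B hA hB hAB
  rcases hA with hA | hA <;> rcases hB with hB | hB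
  · exact oo hA hB hAB
  · -- open ⊆ closed
    have h := step (A := Bᶜ) (B := Aᶜ) (Or.inl hB.isOpen_compl)
      (Or.inr (hA.isClosed_compl.sdiff hB.isOpen_compl)) (Or.inr hA.isClosed_compl)
      (Set.compl_subset_compl.2 hAB)
    rw [qcompl hq (Or.inr hB), qcompl hq (Or.inl hA)] at h
    exact Set.compl_subset_compl.1 h
  · exact step (Or.inr hA) (Or.inl (hB.sdiff hA)) (Or.inl hB) hAB
  · -- closed ⊆ closed
    have h := oo hB.isOpen_compl hA.isOpen_compl (Set.compl_subset_compl.2 hAB)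
    rw [qcompl hq (Or.inr hB), qcompl hq (Or.inr hA)] at h
    exact Set.compl_subset_compl.1 h

/-- Key lemma: the pullback `δ_y ∘ q` is a Dirac point mass at some `r` with `|r| ≤ ‖a‖`. -/
lemma qkey (hq : IsImageTransformation q) (a : X →ᵇ ℝ) (y : Y) :
    ∃ r : ℝ, |r| ≤ ‖a‖ ∧ ∀ A : Set ℝ, IsImage A → (y ∈ q (⇑a ⁻¹' A) ↔ r ∈ A) := by
  have him : ∀ A : Set ℝ, IsImage A → IsImage (⇑a ⁻¹' A) := fun A hA =>
    hA.elim (fun h => Or.inl (h.preimage a.continuous))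
      (fun h => Or.inr (h.preimage a.continuous))
  have habs : ∀ x, |a x| ≤ ‖a‖ := fun x => by
    simpa [Real.norm_eq_abs] using a.norm_coe_le_norm x
  set T := {t : ℝ | y ∈ q (⇑a ⁻¹' Set.Ici t)} with hT
  have hTne : (-‖a‖) ∈ T := by
    have huniv : ⇑a ⁻¹' Set.Ici (-‖a‖) = Set.univ := by
      ext x
      simpa using neg_le_of_abs_le (habs x)
    simp only [hT, Set.mem_setOf_eq, huniv, hq.top, Set.mem_univ]
  have hTbdd : BddAbove T := by
    refine ⟨‖a‖, fun t ht => ?_⟩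
    by_contra hgt
    push_neg at hgt
    have hemp : ⇑a ⁻¹' Set.Ici t = ∅ := by
      ext x
      simp only [Set.mem_preimage, Set.mem_Ici, Set.mem_empty_iff_false, iff_false, not_le]
      exact lt_of_le_of_lt (le_of_abs_le (habs x)) hgt
    rw [Set.mem_setOf_eq, hemp, qempty hq] at ht
    exact ht
  set r := sSup T with hr
  have habove : ∀ t : ℝ, r < t → y ∉ q (⇑a ⁻¹' Set.Ici t) := fun t ht hy =>
    absurd (le_csSup hTbdd hy) (not_le.2 ht)
  have hbelow : ∀ s : ℝ, s < r → y ∉ q (⇑a ⁻¹' Set.Iic s) := by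
    intro s hs hy
    obtain ⟨t, htT, hst⟩ := exists_lt_of_lt_csSup ⟨_, hTne⟩ hs
    have hsub : ⇑a ⁻¹' Set.Iic s ⊆ (⇑a ⁻¹' Set.Ici t)ᶜ := by
      intro x hx
      simp only [Set.mem_compl_iff, Set.mem_preimage, Set.mem_Ici, not_le]
      exact lt_of_le_of_lt hx hst
    have h := qmono hq (him _ (Or.inr isClosed_Iic)) (him _ (Or.inr isClosed_Ici)).compl'
      hsub hy
    rw [qcompl hq (him _ (Or.inr isClosed_Ici))] at h
    exact h htT
  have hIoo : ∀ s t : ℝ, s < r → r < t → y ∈ q (⇑a ⁻¹' Set.Ioo s t) := by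
    intro s t hs ht
    have hd : Disjoint (⇑a ⁻¹' Set.Iic s) (⇑a ⁻¹' Set.Ici t) := by
      rw [Set.disjoint_left]
      intro x hx hx'
      simp only [Set.mem_preimage, Set.mem_Iic] at hx
      simp only [Set.mem_preimage, Set.mem_Ici] at hx'
      linarith
    have hU : (⇑a ⁻¹' Set.Iic s) ∪ (⇑a ⁻¹' Set.Ici t) = ⇑a ⁻¹' (Set.Ioo s t)ᶜ := by
      ext x
      simp only [Set.mem_union, Set.mem_preimage, Set.mem_Iic, Set.mem_Ici,
        Set.mem_compl_iff, Set.mem_Ioo, not_and_or, not_lt]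
    have h := hq.additive _ _ (him _ (Or.inr isClosed_Iic)) (him _ (Or.inr isClosed_Ici))
      (by rw [hU]; exact him _ (IsImage.compl' (Or.inl isOpen_Ioo))) hd
    have hyn : y ∉ q ((⇑a ⁻¹' Set.Iic s) ∪ (⇑a ⁻¹' Set.Ici t)) := by
      rw [h.1]
      rintro (h' | h')
      exacts [hbelow s hs h', habove t ht h']
    rw [hU, Set.preimage_compl, qcompl hq (him _ (Or.inl isOpen_Ioo))] at hyn
    simpa using hyn
  have hOpen : ∀ U : Set ℝ, IsOpen U → (y ∈ q (⇑a ⁻¹' U) ↔ r ∈ U) := by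
    intro U hU
    constructor
    · intro hy
      obtain ⟨L, hLc, hLU, hyL⟩ := hq.regular _ (hU.preimage a.continuous) {y}
        isCompact_singleton (Set.singleton_subset_iff.2 hy)
      have hyL' : y ∈ q L := Set.singleton_subset_iff.1 hyL
      have hKc : IsCompact (⇑a '' L) := hLc.image a.continuous
      have hyK : y ∈ q (⇑a ⁻¹' (⇑a '' L)) := qmono hq (Or.inr hLc.isClosed)
        (him _ (Or.inr hKc.isClosed)) (Set.subset_preimage_image _ _) hyL'
      have hrK : r ∈ ⇑a '' L := by
        by_contra hrK
        obtain ⟨ε, hε, hball⟩ := Metric.isOpen_iff.1 hKc.isClosed.isOpen_compl r hrK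
        have hIooK : Set.Ioo (r - ε) (r + ε) ⊆ (⇑a '' L)ᶜ := by
          rw [← Real.ball_eq_Ioo]; exact hball
        have h1 : y ∈ q (⇑a ⁻¹' Set.Ioo (r - ε) (r + ε)) :=
          hIoo _ _ (by linarith) (by linarith)
        have hsub : ⇑a ⁻¹' (⇑a '' L) ⊆ (⇑a ⁻¹' Set.Ioo (r - ε) (r + ε))ᶜ :=
          fun x hx hx' => hIooK hx' hx
        have h2 := qmono hq (him _ (Or.inr hKc.isClosed))
          (him _ (Or.inl isOpen_Ioo)).compl' hsub hyK
        rw [qcompl hq (him _ (Or.inl isOpen_Ioo))] at h2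
        exact h2 h1
      exact (Set.image_subset_iff.2 hLU) hrK
    · intro hrmem
      obtain ⟨ε, hε, hball⟩ := Metric.isOpen_iff.1 hU r hrmem
      have h1 : y ∈ q (⇑a ⁻¹' Set.Ioo (r - ε) (r + ε)) :=
        hIoo _ _ (by linarith) (by linarith)
      refine qmono hq (him _ (Or.inl isOpen_Ioo)) (him _ (Or.inl hU))
        (Set.preimage_mono ?_) h1
      rw [← Real.ball_eq_Ioo]; exact hball
  have hchar : ∀ A : Set ℝ, IsImage A → (y ∈ q (⇑a ⁻¹' A) ↔ r ∈ A) := by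
    intro A hA
    rcases hA with hA | hA
    · exact hOpen A hA
    · have h := hOpen Aᶜ hA.isOpen_compl
      rw [Set.preimage_compl, qcompl hq (him A (Or.inr hA))] at h
      simp only [Set.mem_compl_iff] at h
      exact not_iff_not.1 h
  refine ⟨r, ?_, hchar⟩
  have huniv : ⇑a ⁻¹' Set.Icc (-‖a‖) ‖a‖ = Set.univ := by
    ext x
    simpa [Set.mem_Icc] using abs_le.1 (habs x)
  have h := (hchar _ (Or.inr isClosed_Icc)).1 (by rw [huniv, hq.top]; trivial)
  rw [Set.mem_Icc] at h
  exact abs_le.2 h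

-- If `δ_y ∘ q` pulled back along `a` is the Dirac mass at `r`, then `qmap q a y = r`.
open Classical in
lemma qmap_eq (hq : IsImageTransformation q) (a : X →ᵇ ℝ) (y : Y) (r : ℝ)
    (hr : ∀ A : Set ℝ, IsImage A → (y ∈ q (⇑a ⁻¹' A) ↔ r ∈ A)) : qmap q a y = r := by
  have hd : ∀ A : Set ℝ, IsImage A → (Measure.dirac r) A =
      ENNReal.ofReal ((fun A : Set X => if y ∈ q A then (1 : ℝ) else 0) (⇑a ⁻¹' A)) := by
    intro A hA
    have hmA : MeasurableSet A := hA.elim IsOpen.measurableSet IsClosed.measurableSet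
    rw [Measure.dirac_apply' r hmA]
    by_cases hrA : r ∈ A
    · rw [Set.indicator_of_mem hrA]
      have hy : y ∈ q (⇑a ⁻¹' A) := (hr A hA).2 hrA
      simp only [if_pos hy]
      simp
    · rw [Set.indicator_of_notMem hrA]
      have hy : y ∉ q (⇑a ⁻¹' A) := fun h => hrA ((hr A hA).1 h)
      simp only [if_neg hy]
      simp
  have hex : ∃ ν : MeasureTheory.Measure ℝ, MeasureTheory.IsProbabilityMeasure ν ∧
      ∀ A : Set ℝ, IsImage A → ν A =
        ENNReal.ofReal ((fun A : Set X => if y ∈ q A then (1 : ℝ) else 0) (⇑a ⁻¹' A)) :=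
    ⟨Measure.dirac r, inferInstance, hd⟩
  unfold qmap qint
  rw [dif_pos hex]
  obtain ⟨hprob, hval⟩ := hex.choose_spec
  have heq : hex.choose = Measure.dirac r := by
    haveI := hprob
    refine MeasureTheory.ext_of_generate_finite {s : Set ℝ | IsOpen s} ?_ ?_ ?_ ?_
    · exact BorelSpace.measurable_eq
    · intro s hs t ht _
      simp only [Set.mem_setOf_eq] at hs ht ⊢
      exact hs.inter ht
    · exact fun s hs => (hval s (Or.inl hs)).trans (hd s (Or.inl hs)).symm
    · rw [hprob.measure_univ, (inferInstance :
        IsProbabilityMeasure (Measure.dirac r)).measure_univ]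
  rw [heq]
  exact integral_dirac (fun t => t) r

end Helpers

/-- integration with respect to an image-transformation yields a bounded
continuous function with `q ∘ a⁻¹ = (q a)⁻¹` and `q(φ ∘ a) = φ ∘ q(a)`. -/
theorem imageTransformation_integral {X Y : Type*} [TopologicalSpace X] [T2Space X]
    [LocallyCompactSpace X] [TopologicalSpace Y] [T2Space Y]
    (q : Set X → Set Y) (hq : IsImageTransformation q) :
    (∀ a : X →ᵇ ℝ, Continuous (qmap q a) ∧ ∃ C : ℝ, ∀ y, |qmap q a y| ≤ C) ∧
    (∀ (a : X →ᵇ ℝ) (A : Set ℝ), IsImage A → q (a ⁻¹' A) = qmap q a ⁻¹' A) ∧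
    ∀ (a : X →ᵇ ℝ) (φ : C(ℝ, ℝ)) (b : X →ᵇ ℝ), (∀ x, b x = φ (a x)) →
      ∀ y, qmap q b y = φ (qmap q a y) := by
  have hchar : ∀ (a : X →ᵇ ℝ) (y : Y) (A : Set ℝ), IsImage A →
      (y ∈ q (⇑a ⁻¹' A) ↔ qmap q a y ∈ A) := by
    intro a y A hA
    obtain ⟨r, _, hr⟩ := qkey hq a y
    rw [qmap_eq hq a y r hr]
    exact hr A hA
  refine ⟨?_, ?_, ?_⟩
  · intro a
    constructor
    · refine continuous_def.2 fun U hU => ?_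
      have : qmap q a ⁻¹' U = q (⇑a ⁻¹' U) := by
        ext y
        exact (hchar a y U (Or.inl hU)).symm
      rw [this]
      exact hq.openMap _ (hU.preimage a.continuous)
    · refine ⟨‖a‖, fun y => ?_⟩
      obtain ⟨r, hb, hr⟩ := qkey hq a y
      rw [qmap_eq hq a y r hr]
      exact hb
  · intro a A hA
    ext y
    exact hchar a y A hA
  · intro a φ b hb y
    obtain ⟨r, _, hr⟩ := qkey hq a y
    have hrb : ∀ A : Set ℝ, IsImage A → (y ∈ q (⇑b ⁻¹' A) ↔ φ r ∈ A) := by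
      intro A hA
      have hpre : ⇑b ⁻¹' A = ⇑a ⁻¹' (φ ⁻¹' A) := by
        ext x
        simp [hb x]
      have hAφ : IsImage (φ ⁻¹' A) := hA.elim
        (fun h => Or.inl (h.preimage φ.continuous))
        (fun h => Or.inr (h.preimage φ.continuous))
      rw [hpre]
      exact hr _ hAφ
    rw [qmap_eq hq b y (φ r) hrb, qmap_eq hq a y r hr]
end

section
/- Change of variables for image-transformations: if q is an image-transformation from a locally compact Hausdorff space X to a Hausdorff space Y, μ a quasi-measure on Y, and a ∈ C_b(X), then (q*μ)(a) = μ(q(a)), where q*μ = μ ∘ q, q(a)(y) = (q*δ_y)(a), and both sides are quasi-integrals. -/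
open Set MeasureTheory BoundedContinuousFunction Filter Topology

section Helpers

variable {X Y : Type*} [TopologicalSpace X] [T2Space X] [TopologicalSpace Y]
variable {q : Set X → Set Y}

lemma q_empty (hq : IsImageTransformation q) : q (∅ : Set X) = ∅ := by
  have h := hq.additive ∅ ∅ (Or.inl isOpen_empty) (Or.inl isOpen_empty)
    (by rw [Set.union_empty]; exact Or.inl isOpen_empty) disjoint_bot_left
  simpa using disjoint_self.mp h.2

lemma q_compl (hq : IsImageTransformation q) {C : Set X} (hC : IsClosed C) :
    q Cᶜ = (q C)ᶜ := by
  have h := hq.additive C Cᶜ (Or.inr hC) (Or.inl hC.isOpen_compl)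
    (by rw [Set.union_compl_self]; exact Or.inl isOpen_univ) disjoint_compl_right
  have huniv : q C ∪ q Cᶜ = Set.univ := by
    rw [← h.1, Set.union_compl_self, hq.top]
  ext z
  constructor
  · intro hz hzC
    exact Set.disjoint_left.mp h.2 hzC hz
  · intro hz
    have hzu : z ∈ q C ∪ q Cᶜ := by rw [huniv]; trivial
    rcases hzu with h' | h'
    · exact absurd h' hz
    · exact h'

/-- Monotonicity of `q` from a closed set into an open superset. -/
lemma q_mono_co (hq : IsImageTransformation q) {C V : Set X} (hC : IsClosed C)
    (hV : IsOpen V) (hCV : C ⊆ V) : q C ⊆ q V := by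
  have hu : C ∪ V \ C = V := Set.union_diff_cancel hCV
  have h := hq.additive C (V \ C) (Or.inr hC) (Or.inl (hV.sdiff hC))
    (by rw [hu]; exact Or.inl hV) disjoint_sdiff_self_right
  rw [← hu, h.1]
  exact Set.subset_union_left

/-- Monotonicity of `q` on open sets. -/
lemma q_mono_oo (hq : IsImageTransformation q) {U V : Set X} (hU : IsOpen U)
    (hV : IsOpen V) (hUV : U ⊆ V) : q U ⊆ q V := by
  intro y hy
  obtain ⟨L, hLc, hLU, hyL⟩ := hq.regular U hU {y} isCompact_singleton
    (Set.singleton_subset_iff.mpr hy)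
  exact q_mono_co hq hLc.isClosed hV (hLU.trans hUV) (hyL rfl)

/-- The key point: the simple quasi-measure `δ_y ∘ q ∘ a⁻¹` is the Dirac measure at
some point `t`. -/
lemma exists_t (hq : IsImageTransformation q) (a : X →ᵇ ℝ) (y : Y) :
    ∃ t : ℝ, ∀ U : Set ℝ, IsOpen U → (t ∈ U ↔ y ∈ q (a ⁻¹' U)) := by
  classical
  set S : Set ℝ := {s | y ∉ q (a ⁻¹' Set.Iio s)} with hSdef
  have hmono : ∀ {s s' : ℝ}, s ≤ s' → y ∈ q (a ⁻¹' Set.Iio s) → y ∈ q (a ⁻¹' Set.Iio s') :=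
    fun {s s'} h hy => q_mono_oo hq (isOpen_Iio.preimage a.continuous)
      (isOpen_Iio.preimage a.continuous)
      (Set.preimage_mono (Set.Iio_subset_Iio h)) hy
  have hSne : S.Nonempty := by
    refine ⟨-‖a‖, ?_⟩
    have hpre : a ⁻¹' Set.Iio (-‖a‖) = ∅ := by
      ext x
      simp only [Set.mem_preimage, Set.mem_Iio, Set.mem_empty_iff_false, iff_false, not_lt]
      have := a.norm_coe_le_norm x
      have := abs_le.mp (by simpa using this)
      linarith [this.1]
    show y ∉ q (a ⁻¹' Set.Iio (-‖a‖))
    rw [hpre, q_empty hq]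
    exact Set.notMem_empty y
  have hSbdd : BddAbove S := by
    refine ⟨‖a‖, fun s hs => ?_⟩
    by_contra hc
    push_neg at hc
    have hpre : a ⁻¹' Set.Iio s = Set.univ := by
      ext x
      simp only [Set.mem_preimage, Set.mem_Iio, Set.mem_univ, iff_true]
      have := a.norm_coe_le_norm x
      have := abs_le.mp (by simpa using this)
      linarith [this.2]
    exact hs (by rw [hpre, hq.top]; trivial)
  set t := sSup S with htdef
  have hlt : ∀ s, s < t → y ∉ q (a ⁻¹' Set.Iio s) := by
    intro s hs hy
    obtain ⟨s', hs'S, hss'⟩ := exists_lt_of_lt_csSup hSne hs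
    exact hs'S (hmono hss'.le hy)
  have hgt : ∀ s, t < s → y ∈ q (a ⁻¹' Set.Iio s) := by
    intro s hs
    by_contra hy
    exact absurd (le_csSup hSbdd (hy : s ∈ S)) (not_le.mpr hs)
  -- forward direction: t ∈ U open → y ∈ q (a⁻¹ U)
  have hA : ∀ U : Set ℝ, IsOpen U → t ∈ U → y ∈ q (a ⁻¹' U) := by
    intro U hU htU
    obtain ⟨ε, hε, hball⟩ := Metric.isOpen_iff.mp hU t htU
    rw [Real.ball_eq_Ioo] at hball
    have hsplitR : Set.Iic (t - ε/2) ∪ Set.Ioo (t - ε/2) (t + ε) = Set.Iio (t + ε) :=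
      Set.Iic_union_Ioo_eq_Iio (by linarith)
    have hsplit := hq.additive (a ⁻¹' Set.Iic (t - ε/2)) (a ⁻¹' Set.Ioo (t - ε/2) (t + ε))
      (Or.inr (isClosed_Iic.preimage a.continuous))
      (Or.inl (isOpen_Ioo.preimage a.continuous))
      (by rw [← Set.preimage_union, hsplitR]; exact Or.inl (isOpen_Iio.preimage a.continuous))
      (Disjoint.preimage _ (by
        apply Set.disjoint_left.mpr
        intro x hx hx'
        exact absurd hx'.1 (not_lt.mpr hx)))
    have hy1 : y ∈ q (a ⁻¹' Set.Iio (t + ε)) := hgt (t + ε) (by linarith)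
    rw [← hsplitR, Set.preimage_union, hsplit.1] at hy1
    rcases hy1 with hy1 | hy1
    · exfalso
      have hsub : q (a ⁻¹' Set.Iic (t - ε/2)) ⊆ q (a ⁻¹' Set.Iio (t - ε/4)) :=
        q_mono_co hq (isClosed_Iic.preimage a.continuous)
          (isOpen_Iio.preimage a.continuous)
          (Set.preimage_mono (fun x hx => show x ∈ Set.Iio (t - ε/4) from
            lt_of_le_of_lt (Set.mem_Iic.mp hx) (by linarith)))
      exact hlt (t - ε/4) (by linarith) (hsub hy1)
    · refine q_mono_oo hq (isOpen_Ioo.preimage a.continuous) (hU.preimage a.continuous)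
        (Set.preimage_mono (fun x hx => hball
          ⟨by have := (Set.mem_Ioo.mp hx).1; linarith, (Set.mem_Ioo.mp hx).2⟩)) hy1
  refine ⟨t, fun U hU => ⟨hA U hU, fun hyU => ?_⟩⟩
  by_contra htU
  obtain ⟨L, hLc, hLU, hyL⟩ := hq.regular _ (hU.preimage a.continuous) {y}
    isCompact_singleton (Set.singleton_subset_iff.mpr hyU)
  have hyqL : y ∈ q L := hyL rfl
  set K := a '' L with hKdef
  have hKc : IsCompact K := hLc.image a.continuous
  rcases K.eq_empty_or_nonempty with hKe | hKne
  · have hLe : L = ∅ := Set.image_eq_empty.mp hKe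
    rw [hLe, q_empty hq] at hyqL
    exact hyqL
  · have htK : t ∉ K := by
      intro h
      obtain ⟨x, hxL, hxt⟩ := h
      exact htU (hxt ▸ hLU hxL)
    have hd : 0 < Metric.infDist t K :=
      (hKc.isClosed.notMem_iff_infDist_pos hKne).mp htK
    set d := Metric.infDist t K with hddef
    set V : Set ℝ := {x | d/2 < dist x t} with hVdef
    have hVo : IsOpen V := isOpen_lt continuous_const (continuous_id.dist continuous_const)
    have hKV : K ⊆ V := by
      intro z hz
      have h1 : d ≤ dist t z := Metric.infDist_le_dist_of_mem hz
      have : d/2 < dist z t := by rw [dist_comm]; linarith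
      exact this
    have hyV : y ∈ q (a ⁻¹' V) :=
      q_mono_co hq hLc.isClosed (hVo.preimage a.continuous)
        (fun x hx => hKV ⟨x, hx, rfl⟩) hyqL
    have hyW : y ∈ q (a ⁻¹' Metric.ball t (d/2)) :=
      hA _ Metric.isOpen_ball (Metric.mem_ball_self (by linarith))
    have hdisj := (hq.additive (a ⁻¹' V) (a ⁻¹' Metric.ball t (d/2))
      (Or.inl (hVo.preimage a.continuous))
      (Or.inl (Metric.isOpen_ball.preimage a.continuous))
      (Or.inl ((hVo.union Metric.isOpen_ball).preimage a.continuous))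
      (Disjoint.preimage _ (Set.disjoint_left.mpr (fun z hzV hzB => by
        have h1 : d/2 < dist z t := hzV
        have h2 : dist z t < d/2 := Metric.mem_ball.mp hzB
        linarith)))).2
    exact Set.disjoint_left.mp hdisj hyV hyW

/-- Two Borel probability measures on `ℝ` agreeing on open sets are equal. -/
lemma prob_ext {ν₁ ν₂ : MeasureTheory.Measure ℝ} (h₁ : MeasureTheory.IsProbabilityMeasure ν₁)
    (h₂ : MeasureTheory.IsProbabilityMeasure ν₂)
    (h : ∀ U : Set ℝ, IsOpen U → ν₁ U = ν₂ U) : ν₁ = ν₂ := by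
  refine MeasureTheory.ext_of_generate_finite {U : Set ℝ | IsOpen U} ?_ ?_ (fun s hs => h s hs) ?_
  · borelize ℝ
    exact BorelSpace.measurable_eq
  · intro s hs u hu _
    rw [Set.mem_setOf_eq] at hs hu ⊢
    exact hs.inter hu
  · rw [h₁.measure_univ, h₂.measure_univ]

lemma qmap_mem_iff (hq : IsImageTransformation q) (a : X →ᵇ ℝ) (y : Y)
    {U : Set ℝ} (hU : IsOpen U) : qmap q a y ∈ U ↔ y ∈ q (a ⁻¹' U) := by
  classical
  obtain ⟨t, ht⟩ := exists_t hq a y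
  have hiff : ∀ A : Set ℝ, IsImage A → (t ∈ A ↔ y ∈ q (a ⁻¹' A)) := by
    rintro A (hA | hA)
    · exact ht A hA
    · have h1 := ht Aᶜ hA.isOpen_compl
      have h2 : q (a ⁻¹' Aᶜ) = (q (a ⁻¹' A))ᶜ := by
        rw [Set.preimage_compl]
        exact q_compl hq (hA.preimage a.continuous)
      rw [h2] at h1
      rw [Set.mem_compl_iff, Set.mem_compl_iff] at h1
      exact not_iff_not.mp h1
  have hdirac : ∀ A : Set ℝ, IsImage A →
      MeasureTheory.Measure.dirac t A =
        ENNReal.ofReal (if y ∈ q (a ⁻¹' A) then (1 : ℝ) else 0) := by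
    intro A hA
    have hmA : MeasurableSet A := hA.elim (fun h => h.measurableSet) (fun h => h.measurableSet)
    rw [MeasureTheory.Measure.dirac_apply' _ hmA]
    by_cases h : y ∈ q (a ⁻¹' A)
    · have htA : t ∈ A := (hiff A hA).mpr h
      simp [Set.indicator, htA, h]
    · have htA : t ∉ A := fun ht' => h ((hiff A hA).mp ht')
      simp [Set.indicator, htA, h]
  have hq_eq : qmap q a y = t := by
    unfold qmap qint
    have hex : ∃ ν : MeasureTheory.Measure ℝ, MeasureTheory.IsProbabilityMeasure ν ∧
        ∀ A : Set ℝ, IsImage A →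
          ν A = ENNReal.ofReal ((fun A : Set X => if y ∈ q A then (1 : ℝ) else 0) (a ⁻¹' A)) :=
      ⟨MeasureTheory.Measure.dirac t, inferInstance, fun A hA => hdirac A hA⟩
    rw [dif_pos hex]
    have hch := hex.choose_spec
    have hche : hex.choose = MeasureTheory.Measure.dirac t := by
      refine prob_ext hch.1 inferInstance (fun U hU => ?_)
      rw [hch.2 U (Or.inl hU), hdirac U (Or.inl hU)]
    rw [hche]
    exact MeasureTheory.integral_dirac (fun s : ℝ => s) t
  rw [hq_eq]
  exact ht U hU

end Helpers

/-- change of variables for image-transformations: `(q*μ)(a) = μ(q(a))`. -/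
theorem imageTransformation_change_of_variables {X Y : Type*} [TopologicalSpace X]
    [T2Space X] [LocallyCompactSpace X] [TopologicalSpace Y] [T2Space Y]
    (q : Set X → Set Y) (hq : IsImageTransformation q)
    (μ : Set Y → ℝ) (hμ : IsQuasiMeasure μ) (a : X →ᵇ ℝ)
    (b : Y →ᵇ ℝ) (hb : ∀ y, b y = qmap q a y) :
    qint (fun A : Set X => μ (q A)) a = qint μ b := by
  have hopen : ∀ U : Set ℝ, IsOpen U → q (a ⁻¹' U) = b ⁻¹' U := by
    intro U hU
    ext y
    rw [Set.mem_preimage, hb y]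
    exact (qmap_mem_iff hq a y hU).symm
  have hset : ∀ A : Set ℝ, IsImage A → q (a ⁻¹' A) = b ⁻¹' A := by
    rintro A (hA | hA)
    · exact hopen A hA
    · have h1 := hopen Aᶜ hA.isOpen_compl
      have h2 : q (a ⁻¹' Aᶜ) = (q (a ⁻¹' A))ᶜ := by
        rw [Set.preimage_compl]
        exact q_compl hq (hA.preimage a.continuous)
      rw [h2, Set.preimage_compl] at h1
      exact compl_injective h1
  have hcond : ∀ A : Set ℝ, IsImage A → μ (q (a ⁻¹' A)) = μ (b ⁻¹' A) :=
    fun A hA => by rw [hset A hA]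
  unfold qint
  by_cases h1 : ∃ ν : MeasureTheory.Measure ℝ, MeasureTheory.IsProbabilityMeasure ν ∧
      ∀ A : Set ℝ, IsImage A →
        ν A = ENNReal.ofReal ((fun A : Set X => μ (q A)) (a ⁻¹' A))
  · have h2 : ∃ ν : MeasureTheory.Measure ℝ, MeasureTheory.IsProbabilityMeasure ν ∧
        ∀ A : Set ℝ, IsImage A → ν A = ENNReal.ofReal (μ (b ⁻¹' A)) := by
      obtain ⟨ν, hν, hνA⟩ := h1
      exact ⟨ν, hν, fun A hA => (hνA A hA).trans (congrArg ENNReal.ofReal (hcond A hA))⟩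
    rw [dif_pos h1, dif_pos h2]
    have hche : h1.choose = h2.choose := by
      refine prob_ext h1.choose_spec.1 h2.choose_spec.1 (fun U hU => ?_)
      rw [h1.choose_spec.2 U (Or.inl hU), h2.choose_spec.2 U (Or.inl hU)]
      exact congrArg ENNReal.ofReal (hcond U (Or.inl hU))
    rw [hche]
  · have h2 : ¬ ∃ ν : MeasureTheory.Measure ℝ, MeasureTheory.IsProbabilityMeasure ν ∧
        ∀ A : Set ℝ, IsImage A → ν A = ENNReal.ofReal (μ (b ⁻¹' A)) := by
      rintro ⟨ν, hν, hνA⟩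
      exact h1 ⟨ν, hν, fun A hA => (hνA A hA).trans (congrArg ENNReal.ofReal (hcond A hA)).symm⟩
    rw [dif_neg h1, dif_neg h2]
end
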